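/- Let l1, l2, l3 > 0 with l1 + l2 + l3 = 1, l3 < l1, l3 < l2, and max(l1,l2) < τ ≤ 1/2, and let F = F_τ^{l1,l2,l3}. With J1 = (l3, l1), J2 = (l1, l1+l2−l3), J3' = (l1+l2−l3, l1+τ−l3), J3'' = (τ−l2, l3), the following inclusions hold: J1 ⊆ I1; J2 ⊆ I2; J3' ⊆ I2, F(J3') ⊆ I1 and F²(J3') ⊆ I3; J3'' ⊆ I1, F(J3'') ⊆ I2 and F²(J3'') ⊆ I3. Thus along one passage of the first return to S3 = (τ−l2, l1+τ−l3), a point of J1 contributes the itinerary symbol a, a point of J2 the symbol b, and a point of J3' (respectively J3'') contributes the three symbols b,a,c (respectively a,b,c), realizing the substitution σ3 relating the symbolic codes of F and of its renormalization. -/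
import Mathlib


open Set

noncomputable section

local instance : Fact ((0:ℝ) < 1) := ⟨one_pos⟩

/-- Representative in `[0,1)` of a point of the circle `ℝ/ℤ`. -/
def rep (x : AddCircle (1:ℝ)) : ℝ := (AddCircle.equivIco 1 0 x : ℝ)

/-- Projection `ℝ → ℝ/ℤ`. -/
def toCirc (t : ℝ) : AddCircle (1:ℝ) := (t : AddCircle (1:ℝ))

/-- The fully flipped 3-interval exchange transformation `F_τ^{l1,l2,l3}`
(it depends only on `l1`, `l2`, `τ`, since `l3 = 1 - l1 - l2`). -/
def FF (l1 l2 τ : ℝ) (x : AddCircle (1:ℝ)) : AddCircle (1:ℝ) :=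
  if rep x < l1 then toCirc (l1 - rep x + τ)
  else if rep x < l1 + l2 then toCirc (2*l1 + l2 - rep x + τ)
  else toCirc (l1 + l2 + 1 - rep x + τ)

lemma rep_toCirc (t : ℝ) (h0 : 0 ≤ t) (h1 : t < 1) : rep (toCirc t) = t := by
  have : rep (toCirc t) = Int.fract (t / 1) * 1 :=
    AddCircle.coe_equivIco_mk_apply (p := (1:ℝ)) t
  rw [this, div_one, mul_one, Int.fract_eq_self]
  exact ⟨h0, h1⟩

lemma toCirc_sub_one (t : ℝ) : toCirc t = toCirc (t - 1) := by
  unfold toCirc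
  have h : ((1 : ℝ) : AddCircle (1:ℝ)) = 0 := AddCircle.coe_period (p := (1:ℝ))
  have ht : (t - 1 + 1 : ℝ) = t := by ring
  calc ((t : ℝ) : AddCircle (1:ℝ)) = ((t - 1 + 1 : ℝ) : AddCircle (1:ℝ)) := by rw [ht]
    _ = ((t - 1 : ℝ) : AddCircle (1:ℝ)) + ((1:ℝ) : AddCircle (1:ℝ)) := by
        rw [QuotientAddGroup.mk_add]
    _ = ((t - 1 : ℝ) : AddCircle (1:ℝ)) := by rw [h, add_zero]

/-- Itineraries of one passage of the first return map to `S3`: points of `J1` visit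
`I1` (symbol `a`), points of `J2` visit `I2` (symbol `b`), points of `J3'` visit
`I2, I1, I3` (symbols `b,a,c`), and points of `J3''` visit `I1, I2, I3` (symbols
`a,b,c`), realizing the substitution `σ3`. -/
theorem statement14 (l1 l2 l3 τ : ℝ)
    (h1 : 0 < l1) (h2 : 0 < l2) (h3 : 0 < l3) (hsum : l1 + l2 + l3 = 1)
    (h31 : l3 < l1) (h32 : l3 < l2) (hτmax : max l1 l2 < τ) (hτ : τ ≤ 1/2) :
    -- J1 = (l3, l1) ⊆ I1
    (∀ x ∈ Ioo l3 l1, toCirc x ∈ toCirc '' Ioo 0 l1) ∧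
    -- J2 = (l1, l1+l2-l3) ⊆ I2
    (∀ x ∈ Ioo l1 (l1 + l2 - l3), toCirc x ∈ toCirc '' Ioo l1 (l1 + l2)) ∧
    -- J3' = (l1+l2-l3, l1+τ-l3): itinerary  b, a, c
    (∀ x ∈ Ioo (l1 + l2 - l3) (l1 + τ - l3),
        toCirc x ∈ toCirc '' Ioo l1 (l1 + l2) ∧
        FF l1 l2 τ (toCirc x) ∈ toCirc '' Ioo 0 l1 ∧
        (FF l1 l2 τ)^[2] (toCirc x) ∈ toCirc '' Ioo (l1 + l2) 1) ∧
    -- J3'' = (τ-l2, l3): itinerary  a, b, c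
    (∀ x ∈ Ioo (τ - l2) l3,
        toCirc x ∈ toCirc '' Ioo 0 l1 ∧
        FF l1 l2 τ (toCirc x) ∈ toCirc '' Ioo l1 (l1 + l2) ∧
        (FF l1 l2 τ)^[2] (toCirc x) ∈ toCirc '' Ioo (l1 + l2) 1) := by
  have hl1τ : l1 < τ := lt_of_le_of_lt (le_max_left _ _) hτmax
  have hl2τ : l2 < τ := lt_of_le_of_lt (le_max_right _ _) hτmax
  have hl1h : l1 < 1/2 := lt_of_lt_of_le hl1τ hτ
  have hl2h : l2 < 1/2 := lt_of_lt_of_le hl2τ hτ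
  refine ⟨?_, ?_, ?_, ?_⟩
  · rintro x ⟨hx1, hx2⟩
    exact ⟨x, ⟨h3.trans hx1, hx2⟩, rfl⟩
  · rintro x ⟨hx1, hx2⟩
    exact ⟨x, ⟨hx1, by linarith⟩, rfl⟩
  · rintro x ⟨hx1, hx2⟩
    have hxI : l1 < x ∧ x < l1 + l2 := ⟨by linarith, by linarith⟩
    have hx0 : 0 ≤ x := by linarith
    have hx1' : x < 1 := by linarith
    have hrx : rep (toCirc x) = x := rep_toCirc x hx0 hx1'
    -- first iterate
    have hF1 : FF l1 l2 τ (toCirc x) = toCirc (2*l1 + l2 - x + τ - 1) := by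
      unfold FF
      rw [hrx, if_neg (by linarith), if_pos (by linarith), toCirc_sub_one]
    set y := 2*l1 + l2 - x + τ - 1 with hy
    have hy0 : 0 < y := by simp only [hy]; linarith
    have hy1 : y < l1 := by simp only [hy]; linarith
    have hry : rep (toCirc y) = y := rep_toCirc y hy0.le (by linarith)
    have hF2 : FF l1 l2 τ (toCirc y) = toCirc (x + l3) := by
      unfold FF
      rw [hry, if_pos hy1]
      congr 1
      simp only [hy]; linarith
    refine ⟨⟨x, hxI, rfl⟩, ?_, ?_⟩
    · rw [hF1]; exact ⟨y, ⟨hy0, hy1⟩, rfl⟩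
    · have : (FF l1 l2 τ)^[2] (toCirc x) = toCirc (x + l3) := by
        rw [Function.iterate_succ_apply', Function.iterate_one, hF1, hF2]
      rw [this]
      exact ⟨x + l3, ⟨by linarith, by linarith⟩, rfl⟩
  · rintro x ⟨hx1, hx2⟩
    have hx0 : 0 < x := by linarith
    have hxl1 : x < l1 := lt_trans hx2 h31
    have hrx : rep (toCirc x) = x := rep_toCirc x hx0.le (by linarith)
    have hF1 : FF l1 l2 τ (toCirc x) = toCirc (l1 - x + τ) := by
      unfold FF
      rw [hrx, if_pos hxl1]
    set y := l1 - x + τ with hy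
    have hyI : l1 < y ∧ y < l1 + l2 := ⟨by simp only [hy]; linarith, by simp only [hy]; linarith⟩
    have hry : rep (toCirc y) = y := rep_toCirc y (by simp only [hy]; linarith) (by
      have : l1 + l2 < 1 := by linarith
      linarith [hyI.2])
    have hF2 : FF l1 l2 τ (toCirc y) = toCirc (l1 + l2 + x) := by
      unfold FF
      rw [hry, if_neg (by linarith [hyI.1]), if_pos hyI.2]
      congr 1
      simp only [hy]; ring
    refine ⟨⟨x, ⟨hx0, hxl1⟩, rfl⟩, ?_, ?_⟩
    · rw [hF1]; exact ⟨y, hyI, rfl⟩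
    · have : (FF l1 l2 τ)^[2] (toCirc x) = toCirc (l1 + l2 + x) := by
        rw [Function.iterate_succ_apply', Function.iterate_one, hF1, hF2]
      rw [this]
      exact ⟨l1 + l2 + x, ⟨by linarith, by linarith⟩, rfl⟩

end
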